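/- Let a, b be positive integers and f : Z → Z a nondecreasing map with f(x + a) = f(x) + b for all x ∈ Z. Then there exists a unique map f^t : Z → Z such that f(x) ≥ y ⟺ x ≥ f^t(y) for all x, y ∈ Z; moreover f^t is nondecreasing and satisfies f^t(x + b) = f^t(x) + a for all x ∈ Z. -/

import Mathlib

/-- Let `a, b > 0` and `f : ℤ → ℤ` nondecreasing with `f (x + a) = f x + b`. Then there
is a unique map `f^t : ℤ → ℤ` with `f x ≥ y ↔ x ≥ f^t y` for all `x, y`; moreover any
such `f^t` is nondecreasing and satisfies `f^t (x + b) = f^t x + a`. -/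
theorem stmt12 (a b : ℤ) (ha : 0 < a) (hb : 0 < b) (f : ℤ → ℤ)
    (hf : Monotone f) (hper : ∀ x : ℤ, f (x + a) = f x + b) :
    (∃! g : ℤ → ℤ, ∀ x y : ℤ, y ≤ f x ↔ g y ≤ x) ∧
    ∀ g : ℤ → ℤ, (∀ x y : ℤ, y ≤ f x ↔ g y ≤ x) →
      Monotone g ∧ ∀ x : ℤ, g (x + b) = g x + a := by
  classical
  -- iterated periodicity
  have hmul : ∀ (x : ℤ) (n : ℤ), f (x + n * a) = f x + n * b := by
    intro x n
    induction n using Int.induction_on with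
    | zero => simp
    | succ k ih =>
        have : x + (k + 1 : ℤ) * a = (x + k * a) + a := by ring
        rw [this, hper, ih]; ring
    | pred k ih =>
        have h1 : x + (-(k:ℤ) - 1) * a + a = x + (-(k:ℤ)) * a := by ring
        have := hper (x + (-(k:ℤ) - 1) * a)
        rw [h1, ih] at this
        linarith
  -- existence of a least preimage point
  have hleast : ∀ y : ℤ, ∃ z : ℤ, y ≤ f z ∧ ∀ w, y ≤ f w → z ≤ w := by
    intro y
    have hinh : ∃ z, y ≤ f z := by
      refine ⟨max (y - f 0) 0 * a, ?_⟩
      have h := hmul 0 (max (y - f 0) 0)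
      simp only [zero_add] at h
      rw [h]
      have hn : (0:ℤ) ≤ max (y - f 0) 0 := le_max_right _ _
      have : max (y - f 0) 0 ≤ max (y - f 0) 0 * b :=
        le_mul_of_one_le_right hn hb
      have h2 : y - f 0 ≤ max (y - f 0) 0 := le_max_left _ _
      linarith
    have hbdd : ∃ c : ℤ, ∀ z, y ≤ f z → c ≤ z := by
      set n := max (f 0 - y + 1) 0 with hn
      have hlow : f (-(n * a)) < y := by
        have h := hmul 0 (-n)
        simp only [zero_add, neg_mul] at h
        rw [h]
        have hn0 : (0:ℤ) ≤ n := le_max_right _ _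
        have : n ≤ n * b := le_mul_of_one_le_right hn0 hb
        have h2 : f 0 - y + 1 ≤ n := le_max_left _ _
        linarith
      refine ⟨-(n * a) + 1, fun z hz => ?_⟩
      by_contra h
      push_neg at h
      have : z ≤ -(n * a) := by omega
      have := hf this
      omega
    exact Int.exists_least_of_bdd hbdd hinh
  set g : ℤ → ℤ := fun y => Classical.choose (hleast y) with hg
  have hgspec : ∀ x y : ℤ, y ≤ f x ↔ g y ≤ x := by
    intro x y
    obtain ⟨h1, h2⟩ := Classical.choose_spec (hleast y)
    constructor
    · exact fun h => h2 x h
    · intro h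
      exact le_trans h1 (hf h)
  constructor
  · refine ⟨g, hgspec, ?_⟩
    intro g' hg'
    funext y
    have h1 : g' y ≤ g y := (hg' (g y) y).mp ((hgspec (g y) y).mpr le_rfl)
    have h2 : g y ≤ g' y := (hgspec (g' y) y).mp ((hg' (g' y) y).mpr le_rfl)
    omega
  · intro g' hg'
    constructor
    · intro y y' hyy'
      have h1 : y' ≤ f (g' y') := (hg' (g' y') y').mpr le_rfl
      exact (hg' (g' y') y).mp (le_trans hyy' h1)
    · intro x
      have h1 : g' (x + b) ≤ g' x + a := by
        refine (hg' (g' x + a) (x + b)).mp ?_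
        rw [hper]
        have : x ≤ f (g' x) := (hg' (g' x) x).mpr le_rfl
        linarith
      have h2 : g' x + a ≤ g' (x + b) := by
        have hx : x ≤ f (g' (x + b) - a) := by
          have h := hper (g' (x + b) - a)
          simp only [sub_add_cancel] at h
          have : x + b ≤ f (g' (x + b)) := (hg' (g' (x + b)) (x + b)).mpr le_rfl
          linarith
        have := (hg' (g' (x + b) - a) x).mp hx
        omega
      omega
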